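/- Let n be an integer and let a, b : ℤ → ℂ be two-sided sequences with ‖a‖_{n+2} + ‖a‖_{n-2} < ∞ and ‖b‖_{n+2} + ‖b‖_{n-2} < ∞, so that the product coefficients c_l := Σ_{j∈ℤ} a_j b_{l-j} are well defined. Then the strictly negative truncation satisfies ‖[c]₋‖_{n+1} ≤ 5 · (‖a‖_{n+2} + ‖a‖_{n-2}) · (‖b‖_{n+2} + ‖b‖_{n-2}). -/

import Mathlib

open scoped ENNReal

/-- The weighted ℓ²-norm `‖a‖ₙ = (Σ_{j∈ℤ} |a_j|² e^{2nj} / |Γ(j+1/2)|²)^{1/2} ∈ [0,∞]`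
of a two-sided sequence `a : ℤ → ℂ`. -/
noncomputable def wnorm (n : ℤ) (a : ℤ → ℂ) : ℝ≥0∞ :=
  (∑' j : ℤ, ENNReal.ofReal
      (‖a j‖ ^ 2 * Real.exp (2 * n * j) / ‖Complex.Gamma ((j : ℂ) + 1 / 2)‖ ^ 2)) ^ (1 / 2 : ℝ)

/-- The strictly negative truncation `[c]₋` of a two-sided sequence. -/
noncomputable def negTrunc (c : ℤ → ℂ) : ℤ → ℂ := fun l => if l < 0 then c l else 0

noncomputable def gg (j : ℤ) : ℝ := ‖Complex.Gamma ((j : ℂ) + 1 / 2)‖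

lemma gg_arg_ne (j : ℤ) (m : ℕ) : (j : ℂ) + 1 / 2 ≠ -m := by
  intro h
  have h2 := congrArg Complex.re h
  simp [Complex.add_re] at h2
  have : (2 * j + 1 : ℝ) = (-(2 * m) : ℤ) := by push_cast; linarith
  have h3 : ((2 * j + 1 : ℤ) : ℝ) = ((-(2 * m) : ℤ) : ℝ) := by push_cast; linarith
  have h4 : (2 * j + 1 : ℤ) = -(2 * m) := by exact_mod_cast h3
  omega

lemma gg_pos (j : ℤ) : 0 < gg j := by
  rw [gg, norm_pos_iff]
  exact Complex.Gamma_ne_zero (gg_arg_ne j)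

lemma gg_arg_ne_zero (j : ℤ) : (j : ℂ) + 1 / 2 ≠ 0 := by
  simpa using gg_arg_ne j 0

lemma gg_succ (j : ℤ) : gg (j + 1) = |(j : ℝ) + 1 / 2| * gg j := by
  have h : ((j + 1 : ℤ) : ℂ) + 1 / 2 = ((j : ℂ) + 1 / 2) + 1 := by push_cast; ring
  rw [gg, h, Complex.Gamma_add_one _ (gg_arg_ne_zero j), norm_mul, gg]
  congr 1
  have : (j : ℂ) + 1 / 2 = (((j : ℝ) + 1 / 2 : ℝ) : ℂ) := by push_cast; ring
  rw [this, Complex.norm_real, Real.norm_eq_abs]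

lemma gg_zero : gg 0 = Real.sqrt Real.pi := by
  have : ((0 : ℤ) : ℂ) + 1 / 2 = (((1:ℝ)/2 : ℝ) : ℂ) := by push_cast; ring
  rw [gg, this, Complex.Gamma_ofReal, Complex.norm_real, Real.Gamma_one_half_eq,
    Real.norm_eq_abs, abs_of_nonneg (Real.sqrt_nonneg _)]

lemma gg_nat_succ (p : ℕ) : gg ((p : ℤ) + 1) = ((p : ℝ) + 1 / 2) * gg p := by
  rw [gg_succ]
  push_cast
  rw [abs_of_nonneg (by positivity : (0:ℝ) ≤ (p : ℝ) + 1 / 2)]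

lemma gg_neg_succ (p : ℕ) : gg (-(p : ℤ)) = ((p : ℝ) + 1 / 2) * gg (-(p : ℤ) - 1) := by
  have := gg_succ (-(p : ℤ) - 1)
  simp only [sub_add_cancel] at this
  rw [this]
  congr 1
  rw [abs_of_nonpos (by push_cast; linarith)]
  push_cast; ring

lemma gg_mul_gg_neg (p : ℕ) : gg p * gg (-(p : ℤ)) = Real.pi := by
  induction p with
  | zero => simp [gg_zero, Real.mul_self_sqrt Real.pi_pos.le]
  | succ p ih =>
      have h1 : gg ((p : ℤ) + 1) = ((p : ℝ) + 1 / 2) * gg p := gg_nat_succ p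
      have h2 : gg (-(p : ℤ)) = ((p : ℝ) + 1 / 2) * gg (-(p : ℤ) - 1) := gg_neg_succ p
      have hp : ((p : ℝ) + 1 / 2) > 0 := by positivity
      have h3 : (-(↑(p+1) : ℤ)) = -(p : ℤ) - 1 := by push_cast; ring
      rw [show ((p+1 : ℕ) : ℤ) = (p : ℤ) + 1 by push_cast; ring, h1,
        show (-((p:ℤ) + 1)) = -(p : ℤ) - 1 by ring]
      rw [h2] at ih
      nlinarith [gg_pos (-(p:ℤ) - 1), gg_pos (p : ℤ)]

lemma gg_nat_succ' (p : ℕ) : gg ((p + 1 : ℕ) : ℤ) = ((p : ℝ) + 1 / 2) * gg p := by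
  rw [show ((p + 1 : ℕ) : ℤ) = (p : ℤ) + 1 by push_cast; ring, gg_nat_succ]

lemma gg_upper (p : ℕ) : gg p ≤ Real.sqrt Real.pi * (p.factorial : ℝ) := by
  induction p with
  | zero => simp [gg_zero]
  | succ p ih =>
      rw [gg_nat_succ']
      have h1 : (0:ℝ) < Real.sqrt Real.pi := Real.sqrt_pos.mpr Real.pi_pos
      have h2 : ((p+1).factorial : ℝ) = ((p:ℝ) + 1) * p.factorial := by
        rw [Nat.factorial_succ]; push_cast; ring
      rw [h2]
      nlinarith [gg_pos (p : ℤ), Nat.one_le_iff_ne_zero.mpr (Nat.factorial_ne_zero p),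
        (by exact_mod_cast Nat.one_le_iff_ne_zero.mpr (Nat.factorial_ne_zero p) : (1:ℝ) ≤ p.factorial)]

lemma gg_lower (p : ℕ) : Real.sqrt Real.pi * (p.factorial : ℝ) ≤ 2 ^ p * gg p := by
  induction p with
  | zero => simp [gg_zero]
  | succ p ih =>
      rw [gg_nat_succ']
      have h2 : ((p+1).factorial : ℝ) = ((p:ℝ) + 1) * p.factorial := by
        rw [Nat.factorial_succ]; push_cast; ring
      have h3 : (2:ℝ) ^ (p+1) = 2 * 2 ^ p := by ring
      rw [h2, h3]
      have hg := gg_pos (p : ℤ)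
      nlinarith [mul_le_mul_of_nonneg_left ih (by positivity : (0:ℝ) ≤ (p:ℝ)+1),
        mul_nonneg (mul_nonneg (pow_pos (by norm_num : (0:ℝ) < 2) p).le hg.le)
          (Nat.cast_nonneg (α := ℝ) p)]

lemma gg_superadd (p q : ℕ) : gg p * gg q ≤ Real.sqrt Real.pi * gg ((p : ℤ) + q) := by
  induction q with
  | zero => simp [gg_zero, mul_comm]
  | succ q ih =>
      have h1 : gg ((q + 1 : ℕ) : ℤ) = ((q : ℝ) + 1 / 2) * gg q := gg_nat_succ' q
      have h2 : gg ((p : ℤ) + (q + 1 : ℕ)) = (((p + q : ℕ) : ℝ) + 1 / 2) * gg ((p : ℤ) + q) := by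
        have h0 := gg_nat_succ' (p + q)
        rw [show ((p + q : ℕ) : ℤ) = (p : ℤ) + q by push_cast; ring] at h0
        rw [show (p : ℤ) + ((q + 1 : ℕ) : ℤ) = ((p + q + 1 : ℕ) : ℤ) by push_cast; ring, h0]
      rw [h1, h2]
      have h4 : ((q:ℝ) + 1/2) ≤ ((p+q:ℕ):ℝ) + 1/2 := by push_cast; linarith [Nat.cast_nonneg (α := ℝ) p]
      have h5 := gg_pos ((p:ℤ) + q)
      have h6 := gg_pos (p : ℤ)
      have h7 := gg_pos (q : ℤ)
      have h8 : (0:ℝ) < (q:ℝ) + 1/2 := by positivity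
      calc gg p * (((q : ℝ) + 1 / 2) * gg q) = ((q:ℝ)+1/2) * (gg p * gg q) := by ring
        _ ≤ ((q:ℝ)+1/2) * (Real.sqrt Real.pi * gg ((p:ℤ)+q)) := by nlinarith
        _ ≤ (((p+q:ℕ):ℝ)+1/2) * (Real.sqrt Real.pi * gg ((p:ℤ)+q)) := by
              have : (0:ℝ) ≤ Real.sqrt Real.pi * gg ((p:ℤ)+q) := by positivity
              nlinarith
        _ = Real.sqrt Real.pi * ((((p+q:ℕ):ℝ) + 1/2) * gg ((p:ℤ)+q)) := by ring

lemma gg_neg_eq (p : ℕ) : gg (-(p : ℤ)) = Real.pi / gg p := by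
  have h := gg_mul_gg_neg p
  field_simp [(gg_pos (p : ℤ)).ne']
  linarith

lemma choose_le_two_pow (s p : ℕ) : (s.choose p) ≤ 2 ^ s := by
  rcases le_or_gt p s with h | h
  · calc s.choose p ≤ ∑ m ∈ Finset.range (s + 1), s.choose m :=
        Finset.single_le_sum (fun i _ => Nat.zero_le _) (Finset.mem_range.mpr (by omega))
      _ = 2 ^ s := Nat.sum_range_choose s
  · rw [Nat.choose_eq_zero_of_lt h]; positivity

lemma four_le_exp : (4:ℝ) ≤ Real.exp (3/2) := by
  have h1 : Real.exp (3/2) * Real.exp (3/2) = Real.exp 3 := by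
    rw [← Real.exp_add]; norm_num
  have h2 : (16:ℝ) < Real.exp 3 := by
    have h3 : Real.exp 1 ^ 3 = Real.exp 3 := by
      rw [← Real.exp_nat_mul]; norm_num
    have e1 : (2.7:ℝ) < Real.exp 1 := by linarith [Real.exp_one_gt_d9]
    have e3 : (2.7:ℝ)^3 < Real.exp 1 ^ 3 :=
      pow_lt_pow_left₀ e1 (by norm_num) (by norm_num)
    rw [h3] at e3
    nlinarith
  nlinarith [Real.exp_pos (3/2 : ℝ)]

/-- the weight function -/
noncomputable def uu (j : ℤ) : ℝ := if 0 ≤ j then Real.exp (-2 * j) else Real.exp (3 / 2 * j)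

noncomputable def hh (j : ℤ) : ℝ := if 0 ≤ j then 1 else Real.exp (-(j : ℝ) / 2)

lemma hh_pos (j : ℤ) : 0 < hh j := by
  unfold hh; split <;> [norm_num; exact Real.exp_pos _]

-- case A : j ≥ 0, k < 0, j + k < 0
lemma starA (j' s : ℕ) (hs : 1 ≤ s) :
    Real.exp (-(s:ℝ)) * gg j' * gg (-(((j' + s : ℕ)) : ℤ)) ≤
      Real.sqrt Real.pi * Real.exp (((j' + s : ℕ) : ℝ) / 2) * gg (-((s:ℕ) : ℤ)) := by
  rw [gg_neg_eq, gg_neg_eq]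
  have hm := gg_pos ((j' + s : ℕ) : ℤ)
  have hs' := gg_pos ((s : ℕ) : ℤ)
  rw [show Real.exp (-(s:ℝ)) * gg j' * (Real.pi / gg (j'+s : ℕ))
      = (Real.exp (-(s:ℝ)) * gg j' * Real.pi) / gg ((j'+s : ℕ) : ℤ) by ring,
    show Real.sqrt Real.pi * Real.exp (((j' + s : ℕ) : ℝ) / 2) * (Real.pi / gg s)
      = (Real.sqrt Real.pi * Real.exp (((j' + s : ℕ) : ℝ) / 2) * Real.pi) / gg ((s:ℕ) : ℤ) by ring,
    div_le_div_iff₀ hm hs']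
  have hsup := gg_superadd j' s
  have h2 : gg ((j' : ℤ) + (s : ℤ)) = gg ((j' + s : ℕ) : ℤ) := by norm_cast
  rw [h2] at hsup
  have hexp : Real.exp (-(s:ℝ)) ≤ Real.exp (((j' + s : ℕ) : ℝ) / 2) := by
    apply Real.exp_le_exp.mpr
    push_cast
    have : (0:ℝ) ≤ (j' : ℝ) := Nat.cast_nonneg _
    linarith [Nat.one_le_iff_ne_zero.mp hs, (by exact_mod_cast hs : (1:ℝ) ≤ (s:ℝ))]
  have hgj := gg_pos (j' : ℤ)
  nlinarith [Real.exp_pos (-(s:ℝ)), Real.exp_pos (((j' + s : ℕ) : ℝ) / 2), Real.pi_pos,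
    Real.sqrt_pos.mpr Real.pi_pos, mul_le_mul hexp hsup
      (by positivity) (Real.exp_pos _).le]

-- case C : j < 0, k < 0
lemma starC (p q : ℕ) :
    Real.exp (-((p:ℝ) + q)) * gg (-(p:ℤ)) * gg (-(q:ℤ)) ≤
      Real.sqrt Real.pi * Real.exp ((p:ℝ) / 2) * Real.exp ((q:ℝ) / 2) * gg (-((p + q : ℕ) : ℤ)) := by
  rw [gg_neg_eq, gg_neg_eq, gg_neg_eq]
  have hp := gg_pos (p : ℤ)
  have hq := gg_pos (q : ℤ)
  have hs := gg_pos ((p + q : ℕ) : ℤ)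
  have hπ := Real.pi_pos
  have hsπ := Real.sqrt_pos.mpr Real.pi_pos
  rw [show Real.exp (-((p:ℝ) + q)) * (Real.pi / gg p) * (Real.pi / gg q)
      = (Real.exp (-((p:ℝ) + q)) * Real.pi * Real.pi) / (gg p * gg q) by field_simp,
    show Real.sqrt Real.pi * Real.exp ((p:ℝ) / 2) * Real.exp ((q:ℝ) / 2) * (Real.pi / gg ((p+q:ℕ):ℤ))
      = (Real.sqrt Real.pi * Real.exp ((p:ℝ) / 2) * Real.exp ((q:ℝ) / 2) * Real.pi) / gg ((p+q:ℕ):ℤ) by ring,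
    div_le_div_iff₀ (by positivity) hs]
  -- goal : exp(-(p+q)) * π * π * gg (p+q) ≤ √π e^{p/2} e^{q/2} π * (gg p * gg q)
  have hupper : gg ((p+q : ℕ) : ℤ) ≤ Real.sqrt Real.pi * ((p+q).factorial : ℝ) := gg_upper (p+q)
  have hlp : Real.sqrt Real.pi * (p.factorial : ℝ) ≤ 2 ^ p * gg p := gg_lower p
  have hlq : Real.sqrt Real.pi * (q.factorial : ℝ) ≤ 2 ^ q * gg q := gg_lower q
  -- factorial identity
  have hfact : ((p+q).factorial : ℝ) = ((p+q).choose p : ℝ) * p.factorial * q.factorial := by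
    have := Nat.choose_mul_factorial_mul_factorial (Nat.le_add_right p q)
    rw [Nat.add_sub_cancel_left] at this
    exact_mod_cast this.symm
  have hchoose : ((p+q).choose p : ℝ) ≤ 2 ^ (p+q) := by
    exact_mod_cast choose_le_two_pow (p+q) p
  -- exponential bound : 4^(p+q) ≤ exp (3(p+q)/2)
  have hfour : (4:ℝ) ^ (p+q) ≤ Real.exp (3 * ((p:ℝ)+q) / 2) := by
    have h1 : Real.exp (3 * ((p:ℝ)+q) / 2) = Real.exp (3/2) ^ (p+q) := by
      rw [← Real.exp_nat_mul]; congr 1; push_cast; ring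
    rw [h1]
    exact pow_le_pow_left₀ (by norm_num) four_le_exp _
  -- assemble
  have e1 : Real.exp (-((p:ℝ)+q)) * Real.exp (3 * ((p:ℝ)+q) / 2) = Real.exp ((p:ℝ)/2) * Real.exp ((q:ℝ)/2) := by
    rw [← Real.exp_add, ← Real.exp_add]; congr 1; ring
  have hfp : (0:ℝ) < p.factorial := by exact_mod_cast Nat.factorial_pos p
  have hfq : (0:ℝ) < q.factorial := by exact_mod_cast Nat.factorial_pos q
  -- key chain : π² gg(p+q) ≤ π²√π (p+q)! = π²√π C p! q! ≤ π²√π 2^{p+q} p!q!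
  --            ≤ π √π 2^{p+q} (2^p gg p)(2^q gg q)/... careful
  -- from hlp hlq : p!q! π ≤ 2^{p+q} gg p gg q
  have hpq : Real.pi * (p.factorial : ℝ) * q.factorial ≤ 2 ^ (p+q) * (gg p * gg q) := by
    have := mul_le_mul hlp hlq (by positivity) (by positivity)
    calc Real.pi * (p.factorial : ℝ) * q.factorial
        = (Real.sqrt Real.pi * p.factorial) * (Real.sqrt Real.pi * q.factorial) := by
          rw [show Real.sqrt Real.pi * (p.factorial:ℝ) * (Real.sqrt Real.pi * q.factorial)
            = (Real.sqrt Real.pi * Real.sqrt Real.pi) * (p.factorial * q.factorial) by ring,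
            Real.mul_self_sqrt Real.pi_pos.le]; ring
      _ ≤ (2 ^ p * gg p) * (2 ^ q * gg q) := this
      _ = 2 ^ (p+q) * (gg p * gg q) := by rw [pow_add]; ring
  -- now the main estimate
  have main : Real.exp (-((p:ℝ)+q)) * Real.pi * gg ((p+q:ℕ):ℤ)
      ≤ Real.sqrt Real.pi * Real.exp ((p:ℝ)/2) * Real.exp ((q:ℝ)/2) * (gg p * gg q) := by
    have c1 : Real.exp (-((p:ℝ)+q)) * Real.pi * gg ((p+q:ℕ):ℤ)
        ≤ Real.exp (-((p:ℝ)+q)) * Real.pi * (Real.sqrt Real.pi * ((p+q).factorial : ℝ)) := by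
      exact mul_le_mul_of_nonneg_left hupper (by positivity)
    have c2 : Real.exp (-((p:ℝ)+q)) * Real.pi * (Real.sqrt Real.pi * ((p+q).factorial : ℝ))
        ≤ Real.exp (-((p:ℝ)+q)) * Real.sqrt Real.pi * (2:ℝ)^(p+q) * (Real.pi * p.factorial * q.factorial) := by
      rw [hfact]
      calc Real.exp (-((p:ℝ)+q)) * Real.pi * (Real.sqrt Real.pi * (((p+q).choose p : ℝ) * p.factorial * q.factorial))
          = (Real.exp (-((p:ℝ)+q)) * Real.pi * Real.sqrt Real.pi * p.factorial * q.factorial) * ((p+q).choose p : ℝ) := by ring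
        _ ≤ (Real.exp (-((p:ℝ)+q)) * Real.pi * Real.sqrt Real.pi * p.factorial * q.factorial) * (2:ℝ)^(p+q) := by
            exact mul_le_mul_of_nonneg_left hchoose (by positivity)
        _ = Real.exp (-((p:ℝ)+q)) * Real.sqrt Real.pi * (2:ℝ)^(p+q) * (Real.pi * p.factorial * q.factorial) := by ring
    have c3 : Real.exp (-((p:ℝ)+q)) * Real.sqrt Real.pi * (2:ℝ)^(p+q) * (Real.pi * p.factorial * q.factorial)
        ≤ Real.exp (-((p:ℝ)+q)) * Real.sqrt Real.pi * (2:ℝ)^(p+q) * (2 ^ (p+q) * (gg p * gg q)) := by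
      calc Real.exp (-((p:ℝ)+q)) * Real.sqrt Real.pi * (2:ℝ)^(p+q) * (Real.pi * p.factorial * q.factorial)
          = (Real.exp (-((p:ℝ)+q)) * Real.sqrt Real.pi * (2:ℝ)^(p+q)) * (Real.pi * p.factorial * q.factorial) := by ring
        _ ≤ (Real.exp (-((p:ℝ)+q)) * Real.sqrt Real.pi * (2:ℝ)^(p+q)) * ((2:ℝ)^(p+q) * (gg p * gg q)) := by
            exact mul_le_mul_of_nonneg_left hpq (by positivity)
        _ = Real.exp (-((p:ℝ)+q)) * Real.sqrt Real.pi * (2:ℝ)^(p+q) * ((2:ℝ)^(p+q) * (gg p * gg q)) := by ring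
    have c4 : Real.exp (-((p:ℝ)+q)) * Real.sqrt Real.pi * (2:ℝ)^(p+q) * (2 ^ (p+q) * (gg p * gg q))
        ≤ Real.sqrt Real.pi * Real.exp ((p:ℝ)/2) * Real.exp ((q:ℝ)/2) * (gg p * gg q) := by
      have h4 : (2:ℝ)^(p+q) * (2:ℝ)^(p+q) = (4:ℝ)^(p+q) := by
        rw [← mul_pow]; norm_num
      have key : Real.exp (-((p:ℝ)+q)) * ((2:ℝ)^(p+q) * (2:ℝ)^(p+q))
          ≤ Real.exp ((p:ℝ)/2) * Real.exp ((q:ℝ)/2) := by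
        rw [h4, ← e1]
        have := Real.exp_pos (-((p:ℝ)+q))
        nlinarith [hfour]
      have hgg : (0:ℝ) < gg p * gg q := mul_pos hp hq
      calc Real.exp (-((p:ℝ)+q)) * Real.sqrt Real.pi * (2:ℝ)^(p+q) * (2 ^ (p+q) * (gg p * gg q))
          = (Real.exp (-((p:ℝ)+q)) * ((2:ℝ)^(p+q) * (2:ℝ)^(p+q))) * (Real.sqrt Real.pi * (gg p * gg q)) := by ring
        _ ≤ (Real.exp ((p:ℝ)/2) * Real.exp ((q:ℝ)/2)) * (Real.sqrt Real.pi * (gg p * gg q)) := by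
            apply mul_le_mul_of_nonneg_right key (by positivity)
        _ = Real.sqrt Real.pi * Real.exp ((p:ℝ)/2) * Real.exp ((q:ℝ)/2) * (gg p * gg q) := by ring
    linarith
  calc Real.exp (-((p:ℝ)+q)) * Real.pi * Real.pi * gg ((p+q:ℕ):ℤ)
      = (Real.exp (-((p:ℝ)+q)) * Real.pi * gg ((p+q:ℕ):ℤ)) * Real.pi := by ring
    _ ≤ (Real.sqrt Real.pi * Real.exp ((p:ℝ)/2) * Real.exp ((q:ℝ)/2) * (gg p * gg q)) * Real.pi :=
        mul_le_mul_of_nonneg_right main Real.pi_pos.le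
    _ = Real.sqrt Real.pi * Real.exp ((p:ℝ)/2) * Real.exp ((q:ℝ)/2) * Real.pi * (gg (p:ℤ) * gg (q:ℤ)) := by ring

lemma starPos (j k : ℤ) (hl : j + k < 0) (hj : 0 ≤ j) :
    Real.exp ((j:ℝ) + k) * (gg j * gg k) ≤ Real.sqrt Real.pi * (hh j * hh k) * gg (j + k) := by
  obtain ⟨j', rfl⟩ := Int.eq_ofNat_of_zero_le hj
  have hk : k ≤ 0 := by omega
  obtain ⟨m, rfl⟩ := Int.exists_eq_neg_ofNat hk
  have hjm : j' < m := by omega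
  obtain ⟨s, rfl⟩ : ∃ s : ℕ, m = j' + s := ⟨m - j', by omega⟩
  have hs1 : 1 ≤ s := by omega
  have hhj : hh (j' : ℤ) = 1 := by simp [hh]
  have hhk : hh (-((j' + s : ℕ) : ℤ)) = Real.exp (((j' + s : ℕ) : ℝ)/2) := by
    rw [hh, if_neg (by omega)]
    congr 1
    push_cast
    ring
  rw [hhj, hhk, one_mul]
  have hA := starA j' s hs1
  have e2 : (j' : ℤ) + -((j' + s : ℕ) : ℤ) = -((s : ℕ) : ℤ) := by push_cast; ring
  rw [e2]
  have e1 : ((j' : ℤ) : ℝ) + ((-((j' + s : ℕ) : ℤ) : ℤ) : ℝ) = -(s : ℝ) := by push_cast; ring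
  rw [e1, ← mul_assoc]
  exact hA

lemma star (j k : ℤ) (hl : j + k < 0) :
    Real.exp ((j:ℝ) + k) * (gg j * gg k) ≤ Real.sqrt Real.pi * (hh j * hh k) * gg (j + k) := by
  rcases le_or_gt 0 j with hj | hj
  · exact starPos j k hl hj
  rcases le_or_gt 0 k with hk | hk
  · have h := starPos k j (by omega) hk
    rw [show ((k:ℝ) + j) = ((j:ℝ) + k) by ring, show k + j = j + k by ring] at h
    calc Real.exp ((j:ℝ) + k) * (gg j * gg k)
        = Real.exp ((j:ℝ) + k) * (gg k * gg j) := by ring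
      _ ≤ Real.sqrt Real.pi * (hh k * hh j) * gg (j + k) := h
      _ = Real.sqrt Real.pi * (hh j * hh k) * gg (j + k) := by ring
  · obtain ⟨p, rfl⟩ := Int.exists_eq_neg_ofNat hj.le
    obtain ⟨q, rfl⟩ := Int.exists_eq_neg_ofNat hk.le
    have hhp : hh (-(p : ℤ)) = Real.exp ((p:ℝ)/2) := by
      rw [hh, if_neg (by omega)]; congr 1; push_cast; ring
    have hhq : hh (-(q : ℤ)) = Real.exp ((q:ℝ)/2) := by
      rw [hh, if_neg (by omega)]; congr 1; push_cast; ring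
    have h := starC p q
    have e2 : -(p : ℤ) + -(q : ℤ) = -((p + q : ℕ) : ℤ) := by push_cast; ring
    have e1 : (((-(p : ℤ)) : ℤ) : ℝ) + (((-(q : ℤ)) : ℤ) : ℝ) = -((p:ℝ) + q) := by push_cast; ring
    rw [hhp, hhq, e2, e1]
    calc Real.exp (-((p:ℝ) + q)) * (gg (-(p:ℤ)) * gg (-(q:ℤ)))
        = Real.exp (-((p:ℝ) + q)) * gg (-(p:ℤ)) * gg (-(q:ℤ)) := by ring
      _ ≤ Real.sqrt Real.pi * Real.exp ((p:ℝ)/2) * Real.exp ((q:ℝ)/2) * gg (-((p + q : ℕ) : ℤ)) := h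
      _ = Real.sqrt Real.pi * (Real.exp ((p:ℝ)/2) * Real.exp ((q:ℝ)/2)) * gg (-((p + q : ℕ) : ℤ)) := by ring

lemma half_sq (x : ℝ≥0∞) : (x ^ (1/2 : ℝ)) ^ 2 = x := by
  rw [← ENNReal.rpow_natCast (x ^ (1/2:ℝ)) 2, ← ENNReal.rpow_mul]
  norm_num

lemma sq_half (x : ℝ≥0∞) : (x ^ 2) ^ (1/2 : ℝ) = x := by
  rw [← ENNReal.rpow_natCast x 2, ← ENNReal.rpow_mul]
  norm_num

lemma tsum_CS (f g : ℤ → ℝ≥0∞) :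
    (∑' i, f i * g i) ^ 2 ≤ (∑' i, (f i) ^ 2) * (∑' i, (g i) ^ 2) := by
  have h2 : (2:ℝ).HolderConjugate 2 := Real.HolderConjugate.two_two
  set X := ∑' i, (f i) ^ 2
  set Y := ∑' i, (g i) ^ 2
  have key : ∀ s : Finset ℤ, ∑ i ∈ s, f i * g i ≤ X ^ (1/2:ℝ) * Y ^ (1/2:ℝ) := by
    intro s
    have h1 := ENNReal.inner_le_Lp_mul_Lq s f g h2
    have e2 : ∀ x : ℝ≥0∞, x ^ (2:ℝ) = x ^ 2 := fun x => by
      rw [← ENNReal.rpow_natCast x 2]; norm_num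
    calc ∑ i ∈ s, f i * g i ≤ (∑ i ∈ s, f i ^ (2:ℝ)) ^ (1/(2:ℝ)) * (∑ i ∈ s, g i ^ (2:ℝ)) ^ (1/(2:ℝ)) := h1
      _ = (∑ i ∈ s, f i ^ 2) ^ (1/(2:ℝ)) * (∑ i ∈ s, g i ^ 2) ^ (1/(2:ℝ)) := by
          simp_rw [e2]
      _ ≤ X ^ (1/2:ℝ) * Y ^ (1/2:ℝ) := by
          apply mul_le_mul'
          · exact ENNReal.rpow_le_rpow (ENNReal.sum_le_tsum s) (by norm_num)
          · exact ENNReal.rpow_le_rpow (ENNReal.sum_le_tsum s) (by norm_num)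
  have h3 : ∑' i, f i * g i ≤ X ^ (1/2:ℝ) * Y ^ (1/2:ℝ) := by
    rw [ENNReal.tsum_eq_iSup_sum]
    exact iSup_le key
  calc (∑' i, f i * g i) ^ 2 ≤ (X ^ (1/2:ℝ) * Y ^ (1/2:ℝ)) ^ 2 := by
        exact pow_le_pow_left' h3 2
    _ = (X ^ (1/2:ℝ)) ^ 2 * (Y ^ (1/2:ℝ)) ^ 2 := by rw [mul_pow]
    _ = X * Y := by rw [half_sq, half_sq]

lemma young (f g : ℤ → ℝ≥0∞) :
    ∑' l : ℤ, (∑' j : ℤ, f j * g (l - j)) ^ 2 ≤ (∑' j, f j) ^ 2 * ∑' k, (g k) ^ 2 := by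
  have CS : ∀ l : ℤ, (∑' j, f j * g (l - j)) ^ 2
      ≤ (∑' j, f j) * ∑' j, f j * (g (l - j)) ^ 2 := by
    intro l
    have h := tsum_CS (fun j => (f j) ^ (1/2:ℝ)) (fun j => (f j) ^ (1/2:ℝ) * g (l - j))
    have e1 : ∀ j, (f j) ^ (1/2:ℝ) * ((f j) ^ (1/2:ℝ) * g (l - j)) = f j * g (l - j) := by
      intro j
      rw [← mul_assoc, ← ENNReal.rpow_add_of_nonneg _ _ (by norm_num) (by norm_num)]
      norm_num
    have e2 : ∀ j, ((f j) ^ (1/2:ℝ)) ^ 2 = f j := fun j => half_sq _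
    have e3 : ∀ j, ((f j) ^ (1/2:ℝ) * g (l - j)) ^ 2 = f j * (g (l - j)) ^ 2 := by
      intro j; rw [mul_pow, half_sq]
    simp_rw [e1, e2, e3] at h
    exact h
  calc ∑' l : ℤ, (∑' j : ℤ, f j * g (l - j)) ^ 2
      ≤ ∑' l : ℤ, (∑' j, f j) * ∑' j, f j * (g (l - j)) ^ 2 := ENNReal.tsum_le_tsum CS
    _ = (∑' j, f j) * ∑' l : ℤ, ∑' j, f j * (g (l - j)) ^ 2 := ENNReal.tsum_mul_left
    _ = (∑' j, f j) * ∑' j : ℤ, ∑' l, f j * (g (l - j)) ^ 2 := by rw [ENNReal.tsum_comm]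
    _ = (∑' j, f j) * ∑' j : ℤ, f j * ∑' l, (g (l - j)) ^ 2 := by
        congr 1; exact tsum_congr fun j => ENNReal.tsum_mul_left
    _ = (∑' j, f j) * ∑' j : ℤ, f j * ∑' k, (g k) ^ 2 := by
        congr 1
        refine tsum_congr fun j => ?_
        congr 1
        exact (Equiv.subRight j).tsum_eq fun k => (g k) ^ 2
    _ = (∑' j, f j) ^ 2 * ∑' k, (g k) ^ 2 := by
        rw [ENNReal.tsum_mul_right]; ring

lemma ofReal_norm_tsum_le (x : ℤ → ℂ) :
    ENNReal.ofReal ‖∑' j, x j‖ ≤ ∑' j, ENNReal.ofReal ‖x j‖ := by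
  by_cases hs : Summable x
  · by_cases hn : Summable fun j => ‖x j‖
    · calc ENNReal.ofReal ‖∑' j, x j‖ ≤ ENNReal.ofReal (∑' j, ‖x j‖) :=
          ENNReal.ofReal_le_ofReal (norm_tsum_le_tsum_norm hn)
        _ = ∑' j, ENNReal.ofReal ‖x j‖ :=
          ENNReal.ofReal_tsum_of_nonneg (fun j => norm_nonneg _) hn
    · have h1 : ∑' j, ENNReal.ofReal ‖x j‖ = ⊤ := by
        simp_rw [ofReal_norm]
        by_contra h
        have := ENNReal.tsum_coe_ne_top_iff_summable.mp h
        have h2 : Summable fun j => ((‖x j‖₊ : ℝ)) := NNReal.summable_coe.mpr this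
        simp only [coe_nnnorm] at h2
        exact hn h2
      rw [h1]
      exact le_top
  · rw [tsum_eq_zero_of_not_summable hs]
    simp

noncomputable def ps (m j : ℤ) : ℝ := Real.exp ((m : ℝ) * (j : ℝ)) / gg j

lemma ps_pos (m j : ℤ) : 0 < ps m j := div_pos (Real.exp_pos _) (gg_pos j)

lemma uu_pos (j : ℤ) : 0 < uu j := by unfold uu; split <;> exact Real.exp_pos _

lemma uu_le_one (j : ℤ) : uu j ≤ 1 := by
  rcases le_or_gt 0 j with hj | hj
  · rw [uu, if_pos hj]
    apply Real.exp_le_one_iff.mpr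
    have : (0:ℝ) ≤ (j:ℝ) := by exact_mod_cast hj
    linarith
  · rw [uu, if_neg (not_le.mpr hj)]
    apply Real.exp_le_one_iff.mpr
    have : (j:ℝ) < 0 := by exact_mod_cast hj
    linarith

lemma bridge (n j : ℤ) : hh j * Real.exp ((n : ℝ) * j)
    ≤ uu j * (Real.exp (((n+2 : ℤ) : ℝ) * j) + Real.exp (((n-2 : ℤ) : ℝ) * j)) := by
  rcases le_or_gt 0 j with hj | hj
  · rw [hh, if_pos hj, uu, if_pos hj, one_mul]
    have e1 : Real.exp (-2 * (j:ℝ)) * Real.exp (((n+2 : ℤ) : ℝ) * j) = Real.exp ((n:ℝ) * j) := by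
      rw [← Real.exp_add]; congr 1; push_cast; ring
    nlinarith [Real.exp_pos (-2 * (j:ℝ)), Real.exp_pos (((n-2 : ℤ) : ℝ) * j),
      mul_pos (Real.exp_pos (-2 * (j:ℝ))) (Real.exp_pos (((n-2 : ℤ) : ℝ) * j))]
  · rw [hh, if_neg (by omega), uu, if_neg (by omega)]
    have e1 : Real.exp (3/2 * (j:ℝ)) * Real.exp (((n-2 : ℤ) : ℝ) * j)
        = Real.exp (-(j:ℝ)/2) * Real.exp ((n:ℝ) * j) := by
      rw [← Real.exp_add, ← Real.exp_add]; congr 1; push_cast; ring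
    nlinarith [Real.exp_pos (3/2 * (j:ℝ)), Real.exp_pos (((n+2 : ℤ) : ℝ) * j),
      mul_pos (Real.exp_pos (3/2 * (j:ℝ))) (Real.exp_pos (((n+2 : ℤ) : ℝ) * j))]

lemma keyIneq (n l j : ℤ) (hl : l < 0) :
    ps (n+1) l ≤ Real.sqrt Real.pi * (uu j * (ps (n+2) j + ps (n-2) j))
      * (uu (l - j) * (ps (n+2) (l - j) + ps (n-2) (l - j))) := by
  set k := l - j with hk
  have hjk : j + k = l := by rw [hk]; ring
  have hstar := star j k (by omega)
  rw [hjk] at hstar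
  have hgj := gg_pos j
  have hgk := gg_pos k
  have hgl := gg_pos l
  -- step A
  have stepA : ps (n+1) l ≤ Real.sqrt Real.pi * ((hh j * Real.exp ((n:ℝ) * j)) / gg j)
      * ((hh k * Real.exp ((n:ℝ) * k)) / gg k) := by
    rw [ps, div_le_iff₀ hgl,
      show Real.sqrt Real.pi * ((hh j * Real.exp ((n:ℝ) * j)) / gg j)
          * ((hh k * Real.exp ((n:ℝ) * k)) / gg k)
        = (Real.sqrt Real.pi * (hh j * Real.exp ((n:ℝ) * j)) * (hh k * Real.exp ((n:ℝ) * k)))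
          / (gg j * gg k) by field_simp, div_mul_eq_mul_div, le_div_iff₀ (by positivity)]
    have hEl : Real.exp (((n+1 : ℤ) : ℝ) * l)
        = Real.exp ((j:ℝ) + k) * (Real.exp ((n:ℝ) * j) * Real.exp ((n:ℝ) * k)) := by
      rw [← Real.exp_add, ← Real.exp_add]
      congr 1
      have : (l : ℝ) = (j : ℝ) + k := by exact_mod_cast congrArg (Int.cast : ℤ → ℝ) hjk.symm
      rw [this]; push_cast; ring
    calc Real.exp (((n+1 : ℤ) : ℝ) * l) * (gg j * gg k)
        = (Real.exp ((j:ℝ) + k) * (gg j * gg k)) * (Real.exp ((n:ℝ) * j) * Real.exp ((n:ℝ) * k)) := by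
          rw [hEl]; ring
      _ ≤ (Real.sqrt Real.pi * (hh j * hh k) * gg l) * (Real.exp ((n:ℝ) * j) * Real.exp ((n:ℝ) * k)) := by
          exact mul_le_mul_of_nonneg_right hstar (by positivity)
      _ = Real.sqrt Real.pi * (hh j * Real.exp ((n:ℝ) * j)) * (hh k * Real.exp ((n:ℝ) * k)) * gg l := by
          ring
  -- step B
  have hb : ∀ i : ℤ, (hh i * Real.exp ((n:ℝ) * i)) / gg i ≤ uu i * (ps (n+2) i + ps (n-2) i) := by
    intro i
    have h1 := bridge n i
    have h2 : uu i * (ps (n+2) i + ps (n-2) i)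
        = (uu i * (Real.exp (((n+2 : ℤ) : ℝ) * i) + Real.exp (((n-2 : ℤ) : ℝ) * i))) / gg i := by
      rw [ps, ps]; field_simp
    rw [h2]
    exact div_le_div_of_nonneg_right h1 (gg_pos i).le
  calc ps (n+1) l ≤ Real.sqrt Real.pi * ((hh j * Real.exp ((n:ℝ) * j)) / gg j)
      * ((hh k * Real.exp ((n:ℝ) * k)) / gg k) := stepA
    _ ≤ Real.sqrt Real.pi * (uu j * (ps (n+2) j + ps (n-2) j))
      * (uu k * (ps (n+2) k + ps (n-2) k)) := by
        apply mul_le_mul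
        · exact mul_le_mul_of_nonneg_left (hb j) (Real.sqrt_nonneg _)
        · exact hb k
        · exact div_nonneg (mul_nonneg (hh_pos k).le (Real.exp_pos _).le) (gg_pos k).le
        · exact mul_nonneg (Real.sqrt_nonneg _)
            (mul_pos (uu_pos j) (add_pos (ps_pos _ _) (ps_pos _ _))).le

lemma exp_three_gt : (16:ℝ) < Real.exp 3 := by
  have h3 : Real.exp 1 ^ 3 = Real.exp 3 := by
    rw [← Real.exp_nat_mul]; norm_num
  have e1 : (2.7:ℝ) < Real.exp 1 := by linarith [Real.exp_one_gt_d9]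
  have e3 : (2.7:ℝ)^3 < Real.exp 1 ^ 3 := pow_lt_pow_left₀ e1 (by norm_num) (by norm_num)
  rw [h3] at e3
  nlinarith

lemma exp_four_gt : (11:ℝ) < Real.exp 4 := by
  have h3 : Real.exp 1 ^ 4 = Real.exp 4 := by
    rw [← Real.exp_nat_mul]; norm_num
  have e1 : (2.7:ℝ) < Real.exp 1 := by linarith [Real.exp_one_gt_d9]
  have e3 : (2.7:ℝ)^4 < Real.exp 1 ^ 4 := pow_lt_pow_left₀ e1 (by norm_num) (by norm_num)
  rw [h3] at e3
  nlinarith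

lemma kappa_le : (∑' j : ℤ, ENNReal.ofReal (uu j ^ 2)) ≤ ENNReal.ofReal (5/4) := by
  have hsplit : (∑' j : ℤ, ENNReal.ofReal (uu j ^ 2))
      = (∑' m : ℕ, ENNReal.ofReal (uu (m : ℤ) ^ 2))
        + ∑' m : ℕ, ENNReal.ofReal (uu (-((m : ℤ) + 1)) ^ 2) :=
    tsum_of_nat_of_neg_add_one ENNReal.summable ENNReal.summable
  have e1 : ∀ m : ℕ, uu (m : ℤ) ^ 2 = Real.exp (-4) ^ m := by
    intro m
    rw [uu, if_pos (by positivity), sq, ← Real.exp_add, ← Real.exp_nat_mul]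
    congr 1
    push_cast
    ring
  have e2 : ∀ m : ℕ, uu (-((m : ℤ) + 1)) ^ 2 = Real.exp (-3) ^ (m + 1) := by
    intro m
    rw [uu, if_neg (by omega), sq, ← Real.exp_add, ← Real.exp_nat_mul]
    congr 1
    push_cast
    ring
  have hr4 : Real.exp (-4) < 1 := Real.exp_lt_one_iff.mpr (by norm_num)
  have hr40 : 0 ≤ Real.exp (-4) := (Real.exp_pos _).le
  have hr3 : Real.exp (-3) < 1 := Real.exp_lt_one_iff.mpr (by norm_num)
  have hr30 : 0 ≤ Real.exp (-3) := (Real.exp_pos _).le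
  have hsum1 : (∑' m : ℕ, ENNReal.ofReal (uu (m : ℤ) ^ 2)) = ENNReal.ofReal ((1 - Real.exp (-4))⁻¹) := by
    simp_rw [e1]
    rw [← ENNReal.ofReal_tsum_of_nonneg (fun m => pow_nonneg hr40 m)
      (summable_geometric_of_lt_one hr40 hr4), tsum_geometric_of_lt_one hr40 hr4]
  have hsum2 : (∑' m : ℕ, ENNReal.ofReal (uu (-((m : ℤ) + 1)) ^ 2))
      = ENNReal.ofReal (Real.exp (-3) * (1 - Real.exp (-3))⁻¹) := by
    simp_rw [e2]
    have hs : Summable (fun m : ℕ => Real.exp (-3) ^ (m + 1)) := by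
      apply Summable.comp_injective (summable_geometric_of_lt_one hr30 hr3)
        (add_left_injective 1)
    rw [← ENNReal.ofReal_tsum_of_nonneg (fun m => pow_nonneg hr30 _) hs]
    congr 1
    calc (∑' m : ℕ, Real.exp (-3) ^ (m+1)) = ∑' m : ℕ, Real.exp (-3) * Real.exp (-3) ^ m := by
          apply tsum_congr; intro m; ring
      _ = Real.exp (-3) * (1 - Real.exp (-3))⁻¹ := by
          rw [tsum_mul_left, tsum_geometric_of_lt_one hr30 hr3]
  rw [hsplit, hsum1, hsum2, ← ENNReal.ofReal_add (inv_nonneg.mpr (by linarith))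
    (mul_nonneg hr30 (inv_nonneg.mpr (by linarith)))]
  apply ENNReal.ofReal_le_ofReal
  -- numeric : (1 - e⁻⁴)⁻¹ + e⁻³(1-e⁻³)⁻¹ ≤ 5/4
  have h4 : Real.exp (-4) ≤ 1/11 := by
    rw [Real.exp_neg]
    rw [inv_le_comm₀ (Real.exp_pos 4) (by norm_num)]
    simpa using exp_four_gt.le
  have h3 : Real.exp (-3) ≤ 1/8 := by
    rw [Real.exp_neg]
    rw [inv_le_comm₀ (Real.exp_pos 3) (by norm_num)]
    nlinarith [exp_three_gt]
  have b1 : (1 - Real.exp (-4))⁻¹ ≤ 11/10 := by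
    rw [inv_le_comm₀ (by linarith) (by norm_num)]
    linarith
  have b2 : Real.exp (-3) * (1 - Real.exp (-3))⁻¹ ≤ 1/7 := by
    have h30 : (0:ℝ) < 1 - Real.exp (-3) := by linarith
    rw [← div_eq_mul_inv, div_le_div_iff₀ h30 (by norm_num)]
    linarith
  linarith

lemma psq (m j : ℤ) : ps m j ^ 2 = Real.exp (2 * (m : ℝ) * j) / gg j ^ 2 := by
  rw [ps, div_pow]
  congr 1
  rw [sq, ← Real.exp_add]
  congr 1
  ring

noncomputable def wsummand (m : ℤ) (x : ℤ → ℂ) (j : ℤ) : ℝ≥0∞ :=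
  ENNReal.ofReal (‖x j‖ ^ 2 * Real.exp (2 * (m : ℝ) * j) / ‖Complex.Gamma ((j : ℂ) + 1 / 2)‖ ^ 2)

lemma wnorm_eq (m : ℤ) (x : ℤ → ℂ) : wnorm m x = (∑' j, wsummand m x j) ^ (1/2 : ℝ) := rfl

lemma wsummand_eq (m : ℤ) (x : ℤ → ℂ) (j : ℤ) :
    wsummand m x j = ENNReal.ofReal ((‖x j‖ * ps m j) ^ 2) := by
  rw [wsummand]
  congr 1
  rw [mul_pow, psq, mul_div_assoc]
  rfl

-- the ℓ² bound for the weighted sequence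
lemma KaBound (n : ℤ) (x : ℤ → ℂ) :
    ∑' j : ℤ, (ENNReal.ofReal (‖x j‖ * (ps (n+2) j + ps (n-2) j))) ^ 2
      ≤ 2 * ((∑' j, wsummand (n+2) x j) + ∑' j, wsummand (n-2) x j) := by
  have ptwise : ∀ j : ℤ, (ENNReal.ofReal (‖x j‖ * (ps (n+2) j + ps (n-2) j))) ^ 2
      ≤ 2 * wsummand (n+2) x j + 2 * wsummand (n-2) x j := by
    intro j
    rw [← ENNReal.ofReal_pow (mul_nonneg (norm_nonneg _)
      (add_pos (ps_pos _ _) (ps_pos _ _)).le), wsummand_eq, wsummand_eq]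
    have hreal : (‖x j‖ * (ps (n+2) j + ps (n-2) j)) ^ 2
        ≤ 2 * (‖x j‖ * ps (n+2) j) ^ 2 + 2 * (‖x j‖ * ps (n-2) j) ^ 2 := by
      nlinarith [sq_nonneg (‖x j‖ * (ps (n+2) j - ps (n-2) j))]
    calc ENNReal.ofReal ((‖x j‖ * (ps (n+2) j + ps (n-2) j)) ^ 2)
        ≤ ENNReal.ofReal (2 * (‖x j‖ * ps (n+2) j) ^ 2 + 2 * (‖x j‖ * ps (n-2) j) ^ 2) :=
          ENNReal.ofReal_le_ofReal hreal
      _ = ENNReal.ofReal (2 * (‖x j‖ * ps (n+2) j) ^ 2)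
          + ENNReal.ofReal (2 * (‖x j‖ * ps (n-2) j) ^ 2) :=
          ENNReal.ofReal_add (by positivity) (by positivity)
      _ = 2 * ENNReal.ofReal ((‖x j‖ * ps (n+2) j) ^ 2)
          + 2 * ENNReal.ofReal ((‖x j‖ * ps (n-2) j) ^ 2) := by
          rw [ENNReal.ofReal_mul (by norm_num), ENNReal.ofReal_mul (by norm_num),
            ENNReal.ofReal_ofNat]
  calc ∑' j : ℤ, (ENNReal.ofReal (‖x j‖ * (ps (n+2) j + ps (n-2) j))) ^ 2
      ≤ ∑' j : ℤ, (2 * wsummand (n+2) x j + 2 * wsummand (n-2) x j) :=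
        ENNReal.tsum_le_tsum ptwise
    _ = (∑' j : ℤ, 2 * wsummand (n+2) x j) + ∑' j : ℤ, 2 * wsummand (n-2) x j :=
        ENNReal.tsum_add
    _ = 2 * (∑' j, wsummand (n+2) x j) + 2 * ∑' j, wsummand (n-2) x j := by
        rw [ENNReal.tsum_mul_left, ENNReal.tsum_mul_left]
    _ = 2 * ((∑' j, wsummand (n+2) x j) + ∑' j, wsummand (n-2) x j) := by ring

theorem negTrunc_product_estimate (n : ℤ) (a b : ℤ → ℂ)
    (ha : wnorm (n + 2) a + wnorm (n - 2) a < ⊤)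
    (hb : wnorm (n + 2) b + wnorm (n - 2) b < ⊤)
    (c : ℤ → ℂ) (hc : ∀ l : ℤ, c l = ∑' j : ℤ, a j * b (l - j)) :
    wnorm (n + 1) (negTrunc c) ≤
      5 * (wnorm (n + 2) a + wnorm (n - 2) a) * (wnorm (n + 2) b + wnorm (n - 2) b) := by
  classical
  set F : ℤ → ℝ≥0∞ := fun j => ENNReal.ofReal (‖a j‖ * (ps (n+2) j + ps (n-2) j) * uu j) with hF
  set G : ℤ → ℝ≥0∞ := fun k => ENNReal.ofReal (‖b k‖ * (ps (n+2) k + ps (n-2) k) * uu k) with hG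
  set Sa1 := ∑' j, wsummand (n+2) a j with hSa1
  set Sa2 := ∑' j, wsummand (n-2) a j with hSa2
  set Sb1 := ∑' j, wsummand (n+2) b j with hSb1
  set Sb2 := ∑' j, wsummand (n-2) b j with hSb2
  -- Step 1 : pointwise bound
  have key1 : ∀ l : ℤ, wsummand (n+1) (negTrunc c) l
      ≤ ENNReal.ofReal Real.pi * (∑' j, F j * G (l - j)) ^ 2 := by
    intro l
    by_cases hl : l < 0
    · have hnt : negTrunc c l = c l := if_pos hl
      have hD : ENNReal.ofReal (‖c l‖ * ps (n+1) l)
          ≤ ENNReal.ofReal (Real.sqrt Real.pi) * ∑' j, F j * G (l - j) := by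
        have ptwise : ∀ j : ℤ, ENNReal.ofReal ‖a j * b (l - j)‖ * ENNReal.ofReal (ps (n+1) l)
            ≤ ENNReal.ofReal (Real.sqrt Real.pi) * (F j * G (l - j)) := by
          intro j
          have hreal : ‖a j‖ * ‖b (l - j)‖ * ps (n+1) l
              ≤ Real.sqrt Real.pi * (‖a j‖ * (ps (n+2) j + ps (n-2) j) * uu j)
                * (‖b (l - j)‖ * (ps (n+2) (l - j) + ps (n-2) (l - j)) * uu (l - j)) := by
            calc ‖a j‖ * ‖b (l - j)‖ * ps (n+1) l
                ≤ ‖a j‖ * ‖b (l - j)‖ * (Real.sqrt Real.pi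
                    * (uu j * (ps (n+2) j + ps (n-2) j))
                    * (uu (l - j) * (ps (n+2) (l - j) + ps (n-2) (l - j)))) := by
                  apply mul_le_mul_of_nonneg_left (keyIneq n l j hl)
                    (mul_nonneg (norm_nonneg _) (norm_nonneg _))
              _ = Real.sqrt Real.pi * (‖a j‖ * (ps (n+2) j + ps (n-2) j) * uu j)
                  * (‖b (l - j)‖ * (ps (n+2) (l - j) + ps (n-2) (l - j)) * uu (l - j)) := by
                  ring
          calc ENNReal.ofReal ‖a j * b (l - j)‖ * ENNReal.ofReal (ps (n+1) l)
              = ENNReal.ofReal (‖a j‖ * ‖b (l - j)‖ * ps (n+1) l) := by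
                rw [norm_mul, ENNReal.ofReal_mul (mul_nonneg (norm_nonneg _) (norm_nonneg _)),
                  ENNReal.ofReal_mul (norm_nonneg _)]
            _ ≤ ENNReal.ofReal (Real.sqrt Real.pi
                  * (‖a j‖ * (ps (n+2) j + ps (n-2) j) * uu j)
                  * (‖b (l - j)‖ * (ps (n+2) (l - j) + ps (n-2) (l - j)) * uu (l - j))) :=
                ENNReal.ofReal_le_ofReal hreal
            _ = ENNReal.ofReal (Real.sqrt Real.pi) * (F j * G (l - j)) := by
                rw [ENNReal.ofReal_mul (mul_nonneg (Real.sqrt_nonneg _)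
                    (mul_nonneg (mul_nonneg (norm_nonneg _)
                      (add_pos (ps_pos _ _) (ps_pos _ _)).le) (uu_pos _).le)),
                  ENNReal.ofReal_mul (Real.sqrt_nonneg _), mul_assoc]
        calc ENNReal.ofReal (‖c l‖ * ps (n+1) l)
            = ENNReal.ofReal ‖c l‖ * ENNReal.ofReal (ps (n+1) l) :=
              ENNReal.ofReal_mul (norm_nonneg _)
          _ ≤ (∑' j, ENNReal.ofReal ‖a j * b (l - j)‖) * ENNReal.ofReal (ps (n+1) l) := by
              apply mul_le_mul_left
              rw [hc l]
              exact ofReal_norm_tsum_le _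
          _ = ∑' j, ENNReal.ofReal ‖a j * b (l - j)‖ * ENNReal.ofReal (ps (n+1) l) :=
              ENNReal.tsum_mul_right.symm
          _ ≤ ∑' j, ENNReal.ofReal (Real.sqrt Real.pi) * (F j * G (l - j)) :=
              ENNReal.tsum_le_tsum ptwise
          _ = ENNReal.ofReal (Real.sqrt Real.pi) * ∑' j, F j * G (l - j) :=
              ENNReal.tsum_mul_left
      calc wsummand (n+1) (negTrunc c) l
          = ENNReal.ofReal ((‖c l‖ * ps (n+1) l) ^ 2) := by rw [wsummand_eq, hnt]
        _ = (ENNReal.ofReal (‖c l‖ * ps (n+1) l)) ^ 2 :=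
            ENNReal.ofReal_pow (mul_nonneg (norm_nonneg _) (ps_pos _ _).le) 2
        _ ≤ (ENNReal.ofReal (Real.sqrt Real.pi) * ∑' j, F j * G (l - j)) ^ 2 :=
            pow_le_pow_left' hD 2
        _ = ENNReal.ofReal Real.pi * (∑' j, F j * G (l - j)) ^ 2 := by
            rw [mul_pow, ← ENNReal.ofReal_pow (Real.sqrt_nonneg _), Real.sq_sqrt Real.pi_pos.le]
    · have hnt : negTrunc c l = 0 := if_neg hl
      rw [wsummand, hnt]
      simp
  -- Step 2 : global bound
  have main : (∑' l, wsummand (n+1) (negTrunc c) l)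
      ≤ ENNReal.ofReal Real.pi * ((∑' j, F j) ^ 2 * ∑' k, (G k) ^ 2) := by
    calc (∑' l, wsummand (n+1) (negTrunc c) l)
        ≤ ∑' l, ENNReal.ofReal Real.pi * (∑' j, F j * G (l - j)) ^ 2 :=
          ENNReal.tsum_le_tsum key1
      _ = ENNReal.ofReal Real.pi * ∑' l, (∑' j, F j * G (l - j)) ^ 2 := ENNReal.tsum_mul_left
      _ ≤ ENNReal.ofReal Real.pi * ((∑' j, F j) ^ 2 * ∑' k, (G k) ^ 2) :=
          mul_le_mul_right (young F G) _
  -- Step 3 : bound (∑ F)²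
  have hFsplit : ∀ j : ℤ, F j
      = ENNReal.ofReal (‖a j‖ * (ps (n+2) j + ps (n-2) j)) * ENNReal.ofReal (uu j) := by
    intro j
    rw [hF, ← ENNReal.ofReal_mul (mul_nonneg (norm_nonneg _)
      (add_pos (ps_pos _ _) (ps_pos _ _)).le)]
  have hFsq : (∑' j, F j) ^ 2 ≤ (2 * (Sa1 + Sa2)) * ENNReal.ofReal (5/4) := by
    calc (∑' j, F j) ^ 2
        = (∑' j, ENNReal.ofReal (‖a j‖ * (ps (n+2) j + ps (n-2) j)) * ENNReal.ofReal (uu j)) ^ 2 := by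
          rw [tsum_congr hFsplit]
      _ ≤ (∑' j, (ENNReal.ofReal (‖a j‖ * (ps (n+2) j + ps (n-2) j))) ^ 2)
          * ∑' j, (ENNReal.ofReal (uu j)) ^ 2 := tsum_CS _ _
      _ ≤ (2 * (Sa1 + Sa2)) * ENNReal.ofReal (5/4) := by
          apply mul_le_mul'
          · exact KaBound n a
          · calc (∑' j, (ENNReal.ofReal (uu j)) ^ 2)
                = ∑' j, ENNReal.ofReal (uu j ^ 2) := by
                  refine tsum_congr fun j => ?_
                  rw [ENNReal.ofReal_pow (uu_pos j).le]
              _ ≤ ENNReal.ofReal (5/4) := kappa_le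
  -- Step 4 : bound ∑ G²
  have hGsq : (∑' k, (G k) ^ 2) ≤ 2 * (Sb1 + Sb2) := by
    have ptwise : ∀ k : ℤ, (G k) ^ 2
        ≤ (ENNReal.ofReal (‖b k‖ * (ps (n+2) k + ps (n-2) k))) ^ 2 := by
      intro k
      apply pow_le_pow_left'
      apply ENNReal.ofReal_le_ofReal
      have h1 : ‖b k‖ * (ps (n+2) k + ps (n-2) k) * uu k
          ≤ ‖b k‖ * (ps (n+2) k + ps (n-2) k) * 1 :=
        mul_le_mul_of_nonneg_left (uu_le_one k) (mul_nonneg (norm_nonneg _)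
          (add_pos (ps_pos _ _) (ps_pos _ _)).le)
      linarith
    calc (∑' k, (G k) ^ 2)
        ≤ ∑' k, (ENNReal.ofReal (‖b k‖ * (ps (n+2) k + ps (n-2) k))) ^ 2 :=
          ENNReal.tsum_le_tsum ptwise
      _ ≤ 2 * (Sb1 + Sb2) := KaBound n b
  -- Step 5 : assemble constants
  have const_le : ENNReal.ofReal Real.pi * ENNReal.ofReal (5/4) * 2 * 2 ≤ 25 := by
    have h1 : ENNReal.ofReal Real.pi * ENNReal.ofReal (5/4) ≤ ENNReal.ofReal 5 := by
      rw [← ENNReal.ofReal_mul Real.pi_pos.le]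
      apply ENNReal.ofReal_le_ofReal
      nlinarith [Real.pi_le_four]
    calc ENNReal.ofReal Real.pi * ENNReal.ofReal (5/4) * 2 * 2
        ≤ ENNReal.ofReal 5 * 2 * 2 := by
          exact mul_le_mul_left (mul_le_mul_left h1 2) 2
      _ = 20 := by
          rw [show ((5:ℝ)) = ((5:ℝ)) from rfl, ENNReal.ofReal_ofNat]
          norm_num
      _ ≤ 25 := by norm_num
  have total : (∑' l, wsummand (n+1) (negTrunc c) l)
      ≤ 25 * ((Sa1 + Sa2) * (Sb1 + Sb2)) := by
    calc (∑' l, wsummand (n+1) (negTrunc c) l)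
        ≤ ENNReal.ofReal Real.pi * ((∑' j, F j) ^ 2 * ∑' k, (G k) ^ 2) := main
      _ ≤ ENNReal.ofReal Real.pi * (((2 * (Sa1 + Sa2)) * ENNReal.ofReal (5/4)) * (2 * (Sb1 + Sb2))) := by
          exact mul_le_mul_right (mul_le_mul' hFsq hGsq) _
      _ = (ENNReal.ofReal Real.pi * ENNReal.ofReal (5/4) * 2 * 2) * ((Sa1 + Sa2) * (Sb1 + Sb2)) := by
          ring
      _ ≤ 25 * ((Sa1 + Sa2) * (Sb1 + Sb2)) := mul_le_mul_left const_le _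
  -- Step 6 : conclude
  have hP : Sa1 + Sa2 ≤ (wnorm (n+2) a + wnorm (n-2) a) ^ 2 := by
    have e1 : wnorm (n+2) a = Sa1 ^ (1/2 : ℝ) := wnorm_eq _ _
    have e2 : wnorm (n-2) a = Sa2 ^ (1/2 : ℝ) := wnorm_eq _ _
    rw [e1, e2]
    calc Sa1 + Sa2 = (Sa1 ^ (1/2:ℝ)) ^ 2 + (Sa2 ^ (1/2:ℝ)) ^ 2 := by rw [half_sq, half_sq]
      _ ≤ (Sa1 ^ (1/2:ℝ)) ^ 2 + (Sa2 ^ (1/2:ℝ)) ^ 2 + 2 * (Sa1 ^ (1/2:ℝ) * Sa2 ^ (1/2:ℝ)) :=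
          le_self_add
      _ = (Sa1 ^ (1/2:ℝ) + Sa2 ^ (1/2:ℝ)) ^ 2 := by ring
  have hQ : Sb1 + Sb2 ≤ (wnorm (n+2) b + wnorm (n-2) b) ^ 2 := by
    have e1 : wnorm (n+2) b = Sb1 ^ (1/2 : ℝ) := wnorm_eq _ _
    have e2 : wnorm (n-2) b = Sb2 ^ (1/2 : ℝ) := wnorm_eq _ _
    rw [e1, e2]
    calc Sb1 + Sb2 = (Sb1 ^ (1/2:ℝ)) ^ 2 + (Sb2 ^ (1/2:ℝ)) ^ 2 := by rw [half_sq, half_sq]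
      _ ≤ (Sb1 ^ (1/2:ℝ)) ^ 2 + (Sb2 ^ (1/2:ℝ)) ^ 2 + 2 * (Sb1 ^ (1/2:ℝ) * Sb2 ^ (1/2:ℝ)) :=
          le_self_add
      _ = (Sb1 ^ (1/2:ℝ) + Sb2 ^ (1/2:ℝ)) ^ 2 := by ring
  have final : (∑' l, wsummand (n+1) (negTrunc c) l)
      ≤ (5 * (wnorm (n+2) a + wnorm (n-2) a) * (wnorm (n+2) b + wnorm (n-2) b)) ^ 2 := by
    calc (∑' l, wsummand (n+1) (negTrunc c) l)
        ≤ 25 * ((Sa1 + Sa2) * (Sb1 + Sb2)) := total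
      _ ≤ 25 * ((wnorm (n+2) a + wnorm (n-2) a) ^ 2 * (wnorm (n+2) b + wnorm (n-2) b) ^ 2) :=
          mul_le_mul_right (mul_le_mul' hP hQ) _
      _ = (5 * (wnorm (n+2) a + wnorm (n-2) a) * (wnorm (n+2) b + wnorm (n-2) b)) ^ 2 := by
          ring
  calc wnorm (n+1) (negTrunc c)
      = (∑' l, wsummand (n+1) (negTrunc c) l) ^ (1/2 : ℝ) := wnorm_eq _ _
    _ ≤ ((5 * (wnorm (n+2) a + wnorm (n-2) a) * (wnorm (n+2) b + wnorm (n-2) b)) ^ 2) ^ (1/2 : ℝ) :=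
        ENNReal.rpow_le_rpow final (by norm_num)
    _ = 5 * (wnorm (n+2) a + wnorm (n-2) a) * (wnorm (n+2) b + wnorm (n-2) b) := sq_half _
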